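/- Let 𝒜 be a unital C*-algebra, let a, b ∈ 𝒜 be positive elements, and let r ≥ 1 be a real number. Then ‖a b‖^r ≤ ‖a^r b^r‖. -/

import Mathlib

open scoped NNReal ENNReal

lemma my_spectralRadius_mul_comm {A : Type*} [NormedRing A] [NormedAlgebra ℂ A] (x y : A) :
    spectralRadius ℂ (x * y) = spectralRadius ℂ (y * x) := by
  have key : ∀ u v : A, spectralRadius ℂ (u * v) ≤ spectralRadius ℂ (v * u) := by
    intro u v
    rw [spectralRadius, spectralRadius]
    refine iSup₂_le fun k hk => ?_
    rcases eq_or_ne k 0 with rfl | hk0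
    · simp
    · have : k ∈ spectrum ℂ (v * u) := by
        have h := spectrum.nonzero_mul_comm (𝕜 := ℂ) u v
        have hmem : k ∈ spectrum ℂ (u * v) \ {0} := ⟨hk, hk0⟩
        rw [h] at hmem
        exact hmem.1
      exact le_iSup₂ (f := fun k (_ : k ∈ spectrum ℂ (v * u)) => (‖k‖₊ : ℝ≥0∞)) k this
  exact le_antisymm (key x y) (key y x)

section
variable {A : Type*} [CStarAlgebra A] [PartialOrder A] [StarOrderedRing A]

lemma my_rpow_add (a : A) (ha : 0 ≤ a) {u v : ℝ} (hu : 0 ≤ u) (hv : 0 ≤ v) (h : u + v ≠ 0) :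
    a ^ (u + v) = a ^ u * a ^ v := by
  rw [CFC.rpow_def, CFC.rpow_def, CFC.rpow_def,
    ← cfc_mul _ _ a (NNReal.continuous_rpow_const hu).continuousOn
    (NNReal.continuous_rpow_const hv).continuousOn]
  exact cfc_congr fun x _ => NNReal.rpow_add' h x

lemma my_nnnorm_rpow_le (a : A) (ha : 0 ≤ a) {u : ℝ} (hu : 0 ≤ u) :
    ‖a ^ u‖₊ ≤ ‖a‖₊ ^ u := by
  rw [CFC.rpow_def]
  refine nnnorm_cfc_nnreal_le fun x hx => ?_
  have hxle : x ≤ ‖a‖₊ := by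
    simpa [cfc_id ℝ≥0 a] using apply_le_nnnorm_cfc_nnreal (id : ℝ≥0 → ℝ≥0) a hx
  exact NNReal.rpow_le_rpow hxle hu

lemma my_key1 (p q : A) (hp : 0 ≤ p) (hq : 0 ≤ q) :
    ((‖p * q‖₊ : ℝ≥0∞)) ^ 2 = spectralRadius ℂ (p * p * (q * q)) := by
  have h1 : ‖p * q‖₊ ^ 2 = ‖star (p * q) * (p * q)‖₊ := by
    rw [CStarRing.nnnorm_star_mul_self, sq]
  have hstar : star (p * q) = q * p := by
    rw [star_mul, hp.isSelfAdjoint.star_eq, hq.isSelfAdjoint.star_eq]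
  have hsa : IsSelfAdjoint (star (p * q) * (p * q)) := IsSelfAdjoint.star_mul_self _
  calc (‖p * q‖₊ : ℝ≥0∞) ^ 2 = (‖star (p * q) * (p * q)‖₊ : ℝ≥0∞) := by
        rw [← ENNReal.coe_pow, h1]
    _ = spectralRadius ℂ (star (p * q) * (p * q)) := (hsa.spectralRadius_eq_nnnorm).symm
    _ = spectralRadius ℂ (q * (p * (p * q))) := by rw [hstar]; congr 1; noncomm_ring
    _ = spectralRadius ℂ ((p * (p * q)) * q) := my_spectralRadius_mul_comm _ _
    _ = spectralRadius ℂ (p * p * (q * q)) := by congr 1; noncomm_ring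

noncomputable def altN (a b : A) (t : ℝ) : ℝ≥0 := ‖a ^ t * b ^ t‖₊

lemma altN_zero [Nontrivial A] (a b : A) (ha : 0 ≤ a) (hb : 0 ≤ b) : altN a b 0 = 1 := by
  rw [altN, CFC.rpow_zero a ha, CFC.rpow_zero b hb, one_mul, nnnorm_one]

lemma my_nnnorm_swap (a b : A) (ha : 0 ≤ a) (hb : 0 ≤ b) {u : ℝ} :
    ‖b ^ u * a ^ u‖₊ = altN a b u := by
  rw [altN, ← nnnorm_star, star_mul, (CFC.rpow_nonneg (a := a) (y := u)).isSelfAdjoint.star_eq,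
    (CFC.rpow_nonneg (a := b) (y := u)).isSelfAdjoint.star_eq]

lemma my_key2 [Nontrivial A] (a b : A) (ha : 0 ≤ a) (hb : 0 ≤ b) {u v : ℝ} (hu : 0 < u) (hv : 0 < v) :
    spectralRadius ℂ (a ^ (u + v) * b ^ (u + v))
      ≤ ((altN a b u * altN a b v : ℝ≥0) : ℝ≥0∞) := by
  have hne : u + v ≠ 0 := by positivity
  have hB : b ^ (u + v) = b ^ v * b ^ u := by
    rw [add_comm]; exact my_rpow_add b hb hv.le hu.le (by positivity)
  rw [my_rpow_add a ha hu.le hv.le hne, hB]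
  have h1 : a ^ u * a ^ v * (b ^ v * b ^ u)
      = a ^ u * (a ^ v * (b ^ v * b ^ u)) := by noncomm_ring
  rw [h1, my_spectralRadius_mul_comm]
  refine (spectrum.spectralRadius_le_nnnorm (𝕜 := ℂ) _).trans ?_
  rw [ENNReal.coe_le_coe]
  have h2 : a ^ v * (b ^ v * b ^ u) * a ^ u
      = (a ^ v * b ^ v) * (b ^ u * a ^ u) := by noncomm_ring
  rw [h2]
  calc ‖(a ^ v * b ^ v) * (b ^ u * a ^ u)‖₊
      ≤ ‖a ^ v * b ^ v‖₊ * ‖b ^ u * a ^ u‖₊ := nnnorm_mul_le _ _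
    _ = altN a b v * altN a b u := by rw [my_nnnorm_swap a b ha hb]; rfl
    _ = altN a b u * altN a b v := mul_comm _ _

lemma my_midpoint [Nontrivial A] (a b : A) (ha : 0 ≤ a) (hb : 0 ≤ b) {u v : ℝ}
    (hu : 0 ≤ u) (hv : 0 ≤ v) :
    altN a b ((u + v) / 2) ^ 2 ≤ altN a b u * altN a b v := by
  rcases eq_or_lt_of_le (by positivity : (0:ℝ) ≤ u + v) with hsum | hsum
  · obtain ⟨rfl, rfl⟩ : u = 0 ∧ v = 0 := by constructor <;> linarith
    simp [altN_zero a b ha hb]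
  · set t : ℝ := (u + v) / 2 with htdef
    have ht : 0 < t := by positivity
    have key1 := my_key1 (a ^ t) (b ^ t) CFC.rpow_nonneg CFC.rpow_nonneg
    have hAa : a ^ t * a ^ t = a ^ (u + v) := by
      rw [← my_rpow_add a ha ht.le ht.le (by positivity)]
      norm_num [htdef]
    have hAb : b ^ t * b ^ t = b ^ (u + v) := by
      rw [← my_rpow_add b hb ht.le ht.le (by positivity)]
      norm_num [htdef]
    rw [hAa, hAb] at key1
    have main : ((altN a b t : ℝ≥0∞)) ^ 2 ≤ ((altN a b u * altN a b v : ℝ≥0) : ℝ≥0∞) := by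
      rw [altN, key1]
      rcases eq_or_lt_of_le hu with rfl0 | hu'
      · obtain rfl : u = 0 := rfl0.symm
        rw [zero_add, altN_zero a b ha hb, one_mul]
        exact spectrum.spectralRadius_le_nnnorm (𝕜 := ℂ) _
      · rcases eq_or_lt_of_le hv with rfl0 | hv'
        · obtain rfl : v = 0 := rfl0.symm
          rw [add_zero, altN_zero a b ha hb, mul_one]
          exact spectrum.spectralRadius_le_nnnorm (𝕜 := ℂ) _
        · exact my_key2 a b ha hb hu' hv'
    rw [← ENNReal.coe_pow, ENNReal.coe_le_coe] at main
    exact main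

lemma my_dyadic [Nontrivial A] (a b : A) (ha : 0 ≤ a) (hb : 0 ≤ b) (r : ℝ) (hr : 0 ≤ r) :
    ∀ n k : ℕ, k ≤ 2 ^ n →
      altN a b (((k : ℝ) / 2 ^ n) * r) ≤ altN a b r ^ ((k : ℝ) / 2 ^ n) := by
  intro n
  induction n with
  | zero =>
    intro k hk
    interval_cases k
    · simpa [altN_zero a b ha hb] using le_of_eq (by simp [NNReal.rpow_zero])
    · simp
  | succ n ih =>
    intro k hk
    rcases Nat.eq_zero_or_pos k with rfl | hkpos
    · simpa [altN_zero a b ha hb] using le_of_eq (by simp [NNReal.rpow_zero])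
    · set i := k / 2 with hi
      set j := k - i with hj
      have hij : i + j = k := by omega
      have hi2 : i ≤ 2 ^ n := by omega
      have hj2 : j ≤ 2 ^ n := by
        have h2 : k ≤ 2 ^ (n + 1) := hk
        have : 2 ^ (n+1) = 2 * 2 ^ n := by ring
        omega
      have harg : ((k : ℝ) / 2 ^ (n+1)) * r
          = ((((i : ℝ) / 2 ^ n) * r) + (((j : ℝ) / 2 ^ n) * r)) / 2 := by
        have hcast : (i : ℝ) + (j : ℝ) = (k : ℝ) := by exact_mod_cast congrArg (Nat.cast (R := ℝ)) hij
        rw [← hcast]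
        push_cast
        field_simp
        ring
      have step1 : altN a b (((k : ℝ) / 2 ^ (n+1)) * r) ^ 2
          ≤ altN a b (((i : ℝ) / 2 ^ n) * r) * altN a b (((j : ℝ) / 2 ^ n) * r) := by
        rw [harg]
        exact my_midpoint a b ha hb (by positivity) (by positivity)
      have step2 : altN a b (((i : ℝ) / 2 ^ n) * r) * altN a b (((j : ℝ) / 2 ^ n) * r)
          ≤ altN a b r ^ ((i : ℝ) / 2 ^ n) * altN a b r ^ ((j : ℝ) / 2 ^ n) :=
        mul_le_mul' (ih i hi2) (ih j hj2)
      have hkne : ((i : ℝ) / 2 ^ n) + ((j : ℝ) / 2 ^ n) ≠ 0 := by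
        have hcast : (i : ℝ) + (j : ℝ) = (k : ℝ) := by exact_mod_cast congrArg (Nat.cast (R := ℝ)) hij
        have : ((i : ℝ) / 2 ^ n) + ((j : ℝ) / 2 ^ n) = (k : ℝ) / 2 ^ n := by
          field_simp; linarith
        rw [this]
        have : (0:ℝ) < (k : ℝ) := by exact_mod_cast hkpos
        positivity
      have step3 : altN a b r ^ ((i : ℝ) / 2 ^ n) * altN a b r ^ ((j : ℝ) / 2 ^ n)
          = (altN a b r ^ ((k : ℝ) / 2 ^ (n+1))) ^ 2 := by
        rw [← NNReal.rpow_add' hkne, sq, ← NNReal.rpow_add' ?hne]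
        · congr 1
          have hcast : (i : ℝ) + (j : ℝ) = (k : ℝ) := by exact_mod_cast congrArg (Nat.cast (R := ℝ)) hij
          rw [← hcast]
          push_cast
          field_simp
          ring
        · case hne =>
            have : ((k : ℝ) / 2 ^ (n+1)) + ((k : ℝ) / 2 ^ (n+1)) = (k:ℝ) / 2^n := by
              field_simp; ring
            rw [this]
            have : (0:ℝ) < (k : ℝ) := by exact_mod_cast hkpos
            positivity
      have := step1.trans (step2.trans_eq step3)
      exact pow_le_pow_iff_left₀ zero_le zero_le two_ne_zero |>.mp this

lemma my_shift [Nontrivial A] (a b : A) (ha : 0 ≤ a) (hb : 0 ≤ b) {δ : ℝ}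
    (hδ0 : 0 ≤ δ) (hδ1 : δ ≤ 1) :
    altN a b 1 ≤ (‖a‖₊ * ‖b‖₊) ^ δ * altN a b (1 - δ) := by
  rcases eq_or_lt_of_le hδ0 with rfl0 | hδpos
  · obtain rfl : δ = 0 := rfl0.symm
    simp [NNReal.rpow_zero]
  rcases eq_or_lt_of_le hδ1 with rfl1 | hδlt
  · obtain rfl : δ = 1 := rfl1
    rw [sub_self, altN_zero a b ha hb, mul_one, NNReal.rpow_one, altN,
      CFC.rpow_one a ha, CFC.rpow_one b hb]
    exact nnnorm_mul_le _ _
  · have h1δ : 0 < 1 - δ := by linarith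
    have hsplit_a : a ^ (1:ℝ) = a ^ δ * a ^ (1 - δ) := by
      rw [← my_rpow_add a ha hδ0 h1δ.le (by norm_num)]
      norm_num
    have hsplit_b : b ^ (1:ℝ) = b ^ (1 - δ) * b ^ δ := by
      rw [← my_rpow_add b hb h1δ.le hδ0 (by norm_num)]
      norm_num
    have : altN a b 1 = ‖a ^ δ * ((a ^ (1-δ) * b ^ (1-δ)) * b ^ δ)‖₊ := by
      rw [altN, hsplit_a, hsplit_b]
      congr 1
      noncomm_ring
    rw [this]
    calc ‖a ^ δ * ((a ^ (1-δ) * b ^ (1-δ)) * b ^ δ)‖₊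
        ≤ ‖a ^ δ‖₊ * (‖a ^ (1-δ) * b ^ (1-δ)‖₊ * ‖b ^ δ‖₊) :=
          (nnnorm_mul_le _ _).trans (mul_le_mul' le_rfl (nnnorm_mul_le _ _))
      _ ≤ ‖a‖₊ ^ δ * (altN a b (1-δ) * ‖b‖₊ ^ δ) := by
          exact mul_le_mul' (my_nnnorm_rpow_le a ha hδ0)
            (mul_le_mul' le_rfl (my_nnnorm_rpow_le b hb hδ0))
      _ = (‖a‖₊ * ‖b‖₊) ^ δ * altN a b (1 - δ) := by
          rw [NNReal.mul_rpow]; ring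

end

/-- **Araki–Lieb–Thirring-type inequality (operator-norm consequence).** For
positive elements `a, b` of a unital C*-algebra and a real `r ≥ 1`,
`‖a b‖^r ≤ ‖a^r b^r‖`, with real powers via the continuous functional calculus. -/
theorem alt_norm_inequality_cstar {A : Type*} [CStarAlgebra A]
    [PartialOrder A] [StarOrderedRing A]
    (a b : A) (ha : 0 ≤ a) (hb : 0 ≤ b) (r : ℝ) (hr : 1 ≤ r) :
    ‖a * b‖ ^ r ≤ ‖CFC.rpow a r * CFC.rpow b r‖ := by
  have hr0 : (0:ℝ) < r := by linarith
  rcases subsingleton_or_nontrivial A with hS | hN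
  · rw [Subsingleton.elim (a * b) 0, norm_zero, Real.zero_rpow hr0.ne']
    exact norm_nonneg _
  · -- notation
    have hab_eq : ‖a * b‖ = (altN a b 1 : ℝ) := by
      rw [altN, CFC.rpow_one a ha, CFC.rpow_one b hb, coe_nnnorm]
    have hrhs_eq : ‖CFC.rpow a r * CFC.rpow b r‖ = (altN a b r : ℝ) := by
      rw [altN, coe_nnnorm]; rfl
    rw [hab_eq, hrhs_eq]
    by_cases hNr : altN a b r = 0
    · -- choose n with r < 2 ^ n
      obtain ⟨n, hn⟩ := pow_unbounded_of_one_lt r (by norm_num : (1:ℝ) < 2)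
      set k : ℕ := ⌊(2:ℝ) ^ n / r⌋₊ with hkdef
      have hk1 : 1 ≤ k := by
        rw [hkdef, Nat.le_floor_iff (by positivity)]
        rw [le_div_iff₀ hr0]
        simpa using hn.le
      have hk2n : k ≤ 2 ^ n := by
        have h1 : (2:ℝ) ^ n / r ≤ (2:ℝ) ^ n := by
          rw [div_le_iff₀ hr0]; nlinarith [pow_pos (by norm_num : (0:ℝ) < 2) n]
        have := Nat.floor_le_floor (R := ℝ) h1
        simpa [Nat.floor_eq_iff] using this.trans_eq (by
          rw [show ((2:ℝ) ^ n) = ((2 ^ n : ℕ) : ℝ) by push_cast; ring, Nat.floor_natCast])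
      set θ : ℝ := (k : ℝ) / 2 ^ n with hθdef
      have hθpos : 0 < θ := by
        have : (0:ℝ) < (k:ℝ) := by exact_mod_cast hk1
        positivity
      have hθr1 : θ * r ≤ 1 := by
        have hfl : (k : ℝ) ≤ (2:ℝ) ^ n / r := Nat.floor_le (by positivity)
        rw [hθdef, div_mul_eq_mul_div, div_le_one (by positivity)]
        calc (k:ℝ) * r ≤ ((2:ℝ)^n / r) * r := by nlinarith
          _ = 2 ^ n := by field_simp
      have hdy : altN a b (θ * r) ≤ altN a b r ^ θ :=
        my_dyadic a b ha hb r hr0.le n k hk2n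
      have hzero : altN a b r ^ θ = 0 := by
        rw [hNr, NNReal.zero_rpow hθpos.ne']
      have hθr0 : altN a b (θ * r) = 0 := le_antisymm (hdy.trans_eq hzero) zero_le
      have hδ : altN a b 1 ≤ (‖a‖₊ * ‖b‖₊) ^ (1 - θ * r) * altN a b (1 - (1 - θ * r)) :=
        my_shift a b ha hb (by linarith) (by nlinarith)
      rw [show (1 : ℝ) - (1 - θ * r) = θ * r by ring, hθr0, mul_zero] at hδ
      have hN1 : altN a b 1 = 0 := le_antisymm hδ zero_le
      rw [hN1, hNr]
      simp [Real.zero_rpow hr0.ne']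
    · -- main case
      have hNrpos : 0 < altN a b r := pos_iff_ne_zero.mpr hNr
      set C : ℝ≥0 := ‖a‖₊ * ‖b‖₊ with hCdef
      have hCN1 : altN a b 1 ≤ C := by
        rw [altN, CFC.rpow_one a ha, CFC.rpow_one b hb]
        exact nnnorm_mul_le _ _
      -- sequences
      set k : ℕ → ℕ := fun n => ⌊(2:ℝ) ^ n / r⌋₊ with hkdef
      set θ : ℕ → ℝ := fun n => (k n : ℝ) / 2 ^ n with hθdef
      have hk2n : ∀ n, k n ≤ 2 ^ n := by
        intro n
        have h1 : (2:ℝ) ^ n / r ≤ (2:ℝ) ^ n := by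
          rw [div_le_iff₀ hr0]; nlinarith [pow_pos (by norm_num : (0:ℝ) < 2) n]
        have := Nat.floor_le_floor (R := ℝ) h1
        simpa using this.trans_eq (by
          rw [show ((2:ℝ) ^ n) = ((2 ^ n : ℕ) : ℝ) by push_cast; ring, Nat.floor_natCast])
      have hθnonneg : ∀ n, 0 ≤ θ n := fun n => by positivity
      have hθr1 : ∀ n, θ n * r ≤ 1 := by
        intro n
        have hfl : ((k n) : ℝ) ≤ (2:ℝ) ^ n / r := Nat.floor_le (by positivity)
        rw [hθdef]
        simp only
        rw [div_mul_eq_mul_div, div_le_one (by positivity)]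
        calc ((k n):ℝ) * r ≤ ((2:ℝ)^n / r) * r := by nlinarith
          _ = 2 ^ n := by field_simp
      -- chain inequality
      have chain : ∀ n, (altN a b 1 : ℝ)
          ≤ (C:ℝ) ^ (1 - θ n * r) * ((altN a b r : ℝ≥0):ℝ) ^ (θ n) := by
        intro n
        have h1 : altN a b 1 ≤ C ^ (1 - θ n * r) * altN a b (1 - (1 - θ n * r)) := by
          refine my_shift a b ha hb ?_ ?_
          · linarith [hθr1 n]
          · nlinarith [hθnonneg n]
        rw [show (1 : ℝ) - (1 - θ n * r) = θ n * r by ring] at h1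
        have h2 : altN a b (θ n * r) ≤ altN a b r ^ (θ n) :=
          my_dyadic a b ha hb r hr0.le n (k n) (hk2n n)
        have h3 : altN a b 1 ≤ C ^ (1 - θ n * r) * altN a b r ^ (θ n) :=
          h1.trans (mul_le_mul' le_rfl h2)
        calc (altN a b 1 : ℝ) ≤ ((C ^ (1 - θ n * r) * altN a b r ^ (θ n) : ℝ≥0) : ℝ) := by
              exact_mod_cast h3
          _ = (C:ℝ) ^ (1 - θ n * r) * ((altN a b r : ℝ≥0):ℝ) ^ (θ n) := by
              push_cast [NNReal.coe_rpow]; ring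
      -- limits
      have hθtend : Filter.Tendsto θ Filter.atTop (nhds (1 / r)) := by
        have hlow : ∀ n, 1 / r - (1/2) ^ n ≤ θ n := by
          intro n
          have := Nat.lt_floor_add_one ((2:ℝ) ^ n / r)
          have h2n : (0:ℝ) < 2 ^ n := by positivity
          rw [hθdef]
          simp only
          rw [le_div_iff₀ h2n]
          have hh : (2:ℝ)^n / r - 1 ≤ (k n : ℝ) := by
            have := Nat.lt_floor_add_one ((2:ℝ) ^ n / r)
            linarith [this]
          calc (1 / r - (1/2) ^ n) * 2 ^ n = 2^n / r - 1 := by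
                field_simp
                have h12 : ((1:ℝ)/2)^n * 2^n = 1 := by rw [← mul_pow]; norm_num
                linear_combination (-r) * h12
              _ ≤ (k n : ℝ) := hh
        have hhigh : ∀ n, θ n ≤ 1 / r := by
          intro n
          have h := hθr1 n
          rw [le_div_iff₀ hr0]
          linarith
        refine tendsto_of_tendsto_of_tendsto_of_le_of_le ?_ tendsto_const_nhds hlow hhigh
        have : Filter.Tendsto (fun n : ℕ => ((1:ℝ)/2) ^ n) Filter.atTop (nhds 0) := by
          refine tendsto_pow_atTop_nhds_zero_of_lt_one (by norm_num) (by norm_num)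
        have := tendsto_const_nhds (x := 1 / r) (f := Filter.atTop (α := ℕ)) |>.sub this
        simpa using this
      have hδtend : Filter.Tendsto (fun n => 1 - θ n * r) Filter.atTop (nhds 0) := by
        have := (hθtend.mul_const r)
        have h1 : (1:ℝ) / r * r = 1 := by field_simp
        rw [h1] at this
        have := (tendsto_const_nhds (x := (1:ℝ)) (f := Filter.atTop (α := ℕ))).sub this
        simpa using this
      have hCpos : (0:ℝ) < C := by
        rcases eq_or_lt_of_le (zero_le : (0:ℝ≥0) ≤ C) with h0 | h
        · exfalso
          apply hNr
          have : altN a b 1 = 0 := by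
            have := hCN1.trans_eq h0.symm
            simpa using this
          -- if N 1 = 0, then C = 0 means a*b might still... derive N r = 0 directly
          -- C = 0 means ‖a‖₊ * ‖b‖₊ = 0
          have hab0 : ‖a‖₊ = 0 ∨ ‖b‖₊ = 0 := mul_eq_zero.mp h0.symm
          rw [altN]
          rcases hab0 with h | h
          · have : a = 0 := by simpa using h
            rw [this]
            simp only [← CFC.rpow_eq_pow]; rw [CFC.zero_rpow hr0.ne']
            simp
          · have : b = 0 := by simpa using h
            rw [this]
            simp only [← CFC.rpow_eq_pow]; rw [CFC.zero_rpow hr0.ne']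
            simp
        · exact_mod_cast h
      have htendRHS : Filter.Tendsto
          (fun n => (C:ℝ) ^ (1 - θ n * r) * ((altN a b r : ℝ≥0):ℝ) ^ (θ n))
          Filter.atTop (nhds (((altN a b r : ℝ≥0):ℝ) ^ (1/r))) := by
        have t1 : Filter.Tendsto (fun n => (C:ℝ) ^ (1 - θ n * r)) Filter.atTop (nhds 1) := by
          have := (Real.continuousAt_const_rpow (a := (C:ℝ)) (b := 0) hCpos.ne').tendsto.comp hδtend
          simpa [Function.comp_def, Real.rpow_zero] using this
        have t2 : Filter.Tendsto (fun n => ((altN a b r : ℝ≥0):ℝ) ^ (θ n)) Filter.atTop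
            (nhds (((altN a b r : ℝ≥0):ℝ) ^ (1/r))) := by
          have hpos : ((altN a b r : ℝ≥0):ℝ) ≠ 0 := by exact_mod_cast hNrpos.ne'
          exact (Real.continuousAt_const_rpow (a := ((altN a b r : ℝ≥0):ℝ))
            (b := 1/r) hpos).tendsto.comp hθtend
        simpa using t1.mul t2
      have key : (altN a b 1 : ℝ) ≤ ((altN a b r : ℝ≥0):ℝ) ^ (1/r) :=
        ge_of_tendsto' htendRHS chain
      -- conclude
      calc ((altN a b 1 : ℝ≥0):ℝ) ^ r ≤ (((altN a b r : ℝ≥0):ℝ) ^ (1/r)) ^ r :=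
            Real.rpow_le_rpow (by positivity) key hr0.le
        _ = ((altN a b r : ℝ≥0):ℝ) ^ ((1/r) * r) := by
            rw [← Real.rpow_mul (by positivity)]
        _ = ((altN a b r : ℝ≥0):ℝ) := by
            rw [show (1/r) * r = 1 by field_simp, Real.rpow_one]
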